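/- Let S be a Hermiticity-preserving linear map from d×d complex matrices to m×m complex matrices. Then ‖S‖_ME = ‖S‖_⋄ if and only if M(S) = ‖S‖_ME · 1_d, i.e. the M-operator of S equals ‖S‖_ME times the d×d identity matrix. -/

import Mathlib

open Matrix Kronecker ComplexOrder

noncomputable section

/-- The old Mathlib `Matrix.PosSemidef.sqrt` (removed), spelled out with its old definition. -/
noncomputable def oldPSDSqrt {n : Type*} [Fintype n] [DecidableEq n] {A : Matrix n n ℂ}
    (hA : A.PosSemidef) : Matrix n n ℂ :=
  (hA.1.eigenvectorUnitary : Matrix n n ℂ) * diagonal ((↑) ∘ Real.sqrt ∘ hA.1.eigenvalues) *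
    (star (hA.1.eigenvectorUnitary : Matrix n n ℂ))

/-- The matrix absolute value `|A| = √(AᴴA)`. -/
noncomputable def matAbs {n : Type*} [Fintype n] [DecidableEq n] (A : Matrix n n ℂ) :
    Matrix n n ℂ :=
  oldPSDSqrt (Matrix.posSemidef_conjTranspose_mul_self A)

/-- The trace norm `‖A‖₁ = Tr √(AᴴA)`. -/
noncomputable def traceNorm {n : Type*} [Fintype n] [DecidableEq n] (A : Matrix n n ℂ) : ℝ :=
  ((matAbs A).trace).re

/-- The positive semidefinite square root of a PSD matrix (zero otherwise). -/
noncomputable def matSqrt {n : Type*} [Fintype n] [DecidableEq n] (σ : Matrix n n ℂ) :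
    Matrix n n ℂ :=
  open scoped Classical in
  if h : σ.PosSemidef then oldPSDSqrt h else 0

/-- A density matrix: positive semidefinite with unit trace. -/
def IsDensity {n : Type*} [Fintype n] [DecidableEq n] (σ : Matrix n n ℂ) : Prop :=
  σ.PosSemidef ∧ σ.trace = 1

/-- The Choi operator of a linear map between matrix algebras. -/
noncomputable def choi {d m : ℕ}
    (S : Matrix (Fin d) (Fin d) ℂ →ₗ[ℂ] Matrix (Fin m) (Fin m) ℂ) :
    Matrix (Fin m × Fin d) (Fin m × Fin d) ℂ :=
  ∑ i : Fin d, ∑ j : Fin d,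
    (S (Matrix.single i j 1)) ⊗ₖ (Matrix.single i j 1)

/-- The ME-norm `‖S‖_ME = ‖J(S)‖₁ / d`. -/
noncomputable def MENorm {d m : ℕ}
    (S : Matrix (Fin d) (Fin d) ℂ →ₗ[ℂ] Matrix (Fin m) (Fin m) ℂ) : ℝ :=
  traceNorm (choi S) / d

/-- The diamond norm: supremum over density matrices σ of
`‖(1 ⊗ √σ) J(S) (1 ⊗ √σ)‖₁`. -/
noncomputable def diamondNorm {d m : ℕ}
    (S : Matrix (Fin d) (Fin d) ℂ →ₗ[ℂ] Matrix (Fin m) (Fin m) ℂ) : ℝ :=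
  ⨆ σ : {σ : Matrix (Fin d) (Fin d) ℂ // IsDensity σ},
    traceNorm (((1 : Matrix (Fin m) (Fin m) ℂ) ⊗ₖ matSqrt σ.1) * choi S *
      ((1 : Matrix (Fin m) (Fin m) ℂ) ⊗ₖ matSqrt σ.1))

/-- The M-operator `M(S) = Tr_B |J(S)|`. -/
noncomputable def Mop {d m : ℕ}
    (S : Matrix (Fin d) (Fin d) ℂ →ₗ[ℂ] Matrix (Fin m) (Fin m) ℂ) :
    Matrix (Fin d) (Fin d) ℂ :=
  Matrix.of fun k l => ∑ b : Fin m, matAbs (choi S) (b, k) (b, l)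

/-- A quantum channel: completely positive (PSD Choi operator, by Choi's theorem)
and trace preserving. -/
def IsQChannel {d m : ℕ}
    (S : Matrix (Fin d) (Fin d) ℂ →ₗ[ℂ] Matrix (Fin m) (Fin m) ℂ) : Prop :=
  (choi S).PosSemidef ∧ ∀ ρ : Matrix (Fin d) (Fin d) ℂ, (S ρ).trace = ρ.trace


open scoped MatrixOrder in
lemma oldPSDSqrt_eq_csqrt {n : Type*} [Fintype n] [DecidableEq n] {A : Matrix n n ℂ}
    (hA : A.PosSemidef) : oldPSDSqrt hA = CFC.sqrt A := by
  rw [CFC.sqrt_eq_real_sqrt A (Matrix.nonneg_iff_posSemidef.mpr hA), cfcₙ_eq_cfc, hA.1.cfc_eq]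
  rfl

/-- the old `PosSemidef.sqrt`, as `oldPSDSqrt` -/
abbrev Matrix.PosSemidef.sqrt {n : Type*} [Fintype n] [DecidableEq n] {A : Matrix n n ℂ}
    (hA : A.PosSemidef) : Matrix n n ℂ := oldPSDSqrt hA

open scoped MatrixOrder in
lemma Matrix.PosSemidef.posSemidef_sqrt {n : Type*} [Fintype n] [DecidableEq n]
    {A : Matrix n n ℂ} (hA : A.PosSemidef) : (oldPSDSqrt hA).PosSemidef := by
  rw [oldPSDSqrt_eq_csqrt]
  exact Matrix.nonneg_iff_posSemidef.mp (CFC.sqrt_nonneg A)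

open scoped MatrixOrder in
lemma Matrix.PosSemidef.sqrt_mul_self {n : Type*} [Fintype n] [DecidableEq n]
    {A : Matrix n n ℂ} (hA : A.PosSemidef) : oldPSDSqrt hA * oldPSDSqrt hA = A := by
  rw [oldPSDSqrt_eq_csqrt]
  exact CFC.sqrt_mul_sqrt_self A (Matrix.nonneg_iff_posSemidef.mpr hA)

open scoped MatrixOrder in
lemma Matrix.PosSemidef.eq_sqrt_of_sq_eq {n : Type*} [Fintype n] [DecidableEq n]
    {A B : Matrix n n ℂ} (hB : B.PosSemidef) (hA : A.PosSemidef) (h : B ^ 2 = A) :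
    B = oldPSDSqrt hA := by
  rw [oldPSDSqrt_eq_csqrt]
  exact (CFC.sqrt_unique (by rw [← pow_two]; exact h)
    (Matrix.nonneg_iff_posSemidef.mpr hB)).symm



namespace StmtAux
set_option linter.unusedSectionVars false

variable {n : Type*} [Fintype n] [DecidableEq n]

/-- conjugation of a real diagonal by a matrix -/
noncomputable def cdiag (U : Matrix n n ℂ) (g : n → ℝ) : Matrix n n ℂ :=
  U * Matrix.diagonal (fun i => (g i : ℂ)) * Uᴴ

lemma diagonal_real_herm (g : n → ℝ) :
    (Matrix.diagonal (fun i => (g i : ℂ)))ᴴ = Matrix.diagonal (fun i => (g i : ℂ)) := by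
  ext i j
  by_cases h : i = j
  · subst h
    simp [Matrix.conjTranspose_apply, Matrix.diagonal_apply_eq, Complex.star_def,
      Complex.conj_ofReal]
  · simp [Matrix.conjTranspose_apply, Matrix.diagonal_apply_ne _ h,
      Matrix.diagonal_apply_ne' _ h]

lemma cdiag_herm (U : Matrix n n ℂ) (g : n → ℝ) : (cdiag U g).IsHermitian := by
  unfold cdiag Matrix.IsHermitian
  rw [conjTranspose_mul, conjTranspose_mul, conjTranspose_conjTranspose, diagonal_real_herm,
    ← Matrix.mul_assoc]

lemma cdiag_mul (U : Matrix n n ℂ) (hU' : Uᴴ * U = 1) (g₁ g₂ : n → ℝ) :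
    cdiag U g₁ * cdiag U g₂ = cdiag U (fun i => g₁ i * g₂ i) := by
  unfold cdiag
  calc U * diagonal (fun i => (g₁ i : ℂ)) * Uᴴ * (U * diagonal (fun i => (g₂ i : ℂ)) * Uᴴ)
      = U * diagonal (fun i => (g₁ i : ℂ)) * (Uᴴ * U) * diagonal (fun i => (g₂ i : ℂ)) * Uᴴ := by
        simp only [Matrix.mul_assoc]
    _ = U * (diagonal (fun i => (g₁ i : ℂ)) * diagonal (fun i => (g₂ i : ℂ))) * Uᴴ := by
        rw [hU']; simp only [Matrix.mul_one, Matrix.mul_assoc]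
    _ = _ := by rw [diagonal_mul_diagonal]; push_cast; rfl

lemma cdiag_add (U : Matrix n n ℂ) (g₁ g₂ : n → ℝ) :
    cdiag U g₁ + cdiag U g₂ = cdiag U (fun i => g₁ i + g₂ i) := by
  unfold cdiag
  rw [← add_mul, ← mul_add, diagonal_add]
  congr 2
  ext i
  push_cast
  rfl

lemma cdiag_sub (U : Matrix n n ℂ) (g₁ g₂ : n → ℝ) :
    cdiag U g₁ - cdiag U g₂ = cdiag U (fun i => g₁ i - g₂ i) := by
  unfold cdiag
  rw [← sub_mul, ← mul_sub, diagonal_sub]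
  congr 2
  ext i
  push_cast
  rfl

lemma cdiag_psd (U : Matrix n n ℂ) (g : n → ℝ) (hg : ∀ i, 0 ≤ g i) :
    (cdiag U g).PosSemidef := by
  have hdd : Matrix.diagonal (fun i => (Real.sqrt (g i) : ℂ)) *
      Matrix.diagonal (fun i => (Real.sqrt (g i) : ℂ)) =
      Matrix.diagonal (fun i => (g i : ℂ)) := by
    rw [diagonal_mul_diagonal]
    have : (fun i => (Real.sqrt (g i) : ℂ) * (Real.sqrt (g i) : ℂ)) =
        fun i => ((g i : ℝ) : ℂ) := by
      funext i
      rw [← Complex.ofReal_mul, Real.mul_self_sqrt (hg i)]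
    rw [this]
  have key : cdiag U g = (U * Matrix.diagonal (fun i => (Real.sqrt (g i) : ℂ))) *
      (U * Matrix.diagonal (fun i => (Real.sqrt (g i) : ℂ)))ᴴ := by
    rw [conjTranspose_mul, diagonal_real_herm]
    calc cdiag U g = U * (Matrix.diagonal (fun i => (Real.sqrt (g i) : ℂ)) *
          Matrix.diagonal (fun i => (Real.sqrt (g i) : ℂ))) * Uᴴ := by
          unfold cdiag; rw [hdd]
      _ = _ := by simp only [Matrix.mul_assoc]
  rw [key]
  exact posSemidef_self_mul_conjTranspose _

lemma cdiag_const (U : Matrix n n ℂ) (hU : U * Uᴴ = 1) (c : ℝ) :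
    cdiag U (fun _ => c) = (c : ℂ) • (1 : Matrix n n ℂ) := by
  unfold cdiag
  have : (Matrix.diagonal (fun _ : n => (c : ℂ))) = (c : ℂ) • (1 : Matrix n n ℂ) := by
    ext i j
    by_cases h : i = j <;>
      simp [Matrix.diagonal_apply, Matrix.one_apply, Matrix.smul_apply, h]
  rw [this, Matrix.mul_smul, Matrix.mul_one, Matrix.smul_mul, hU]

lemma cdiag_trace (U : Matrix n n ℂ) (hU' : Uᴴ * U = 1) (g : n → ℝ) :
    (cdiag U g).trace = ∑ i, (g i : ℂ) := by
  unfold cdiag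
  rw [trace_mul_comm, ← Matrix.mul_assoc, hU', Matrix.one_mul, trace_diagonal]

section herm

variable {X : Matrix n n ℂ} (hX : X.IsHermitian)

/-- the unitary from the spectral theorem, as a plain matrix -/
noncomputable def specU : Matrix n n ℂ := (hX.eigenvectorUnitary : Matrix n n ℂ)

lemma specU_mul : specU hX * (specU hX)ᴴ = 1 := by
  rw [← Matrix.star_eq_conjTranspose]
  exact Matrix.mem_unitaryGroup_iff.mp hX.eigenvectorUnitary.2

lemma specU_mul' : (specU hX)ᴴ * specU hX = 1 := by
  rw [← Matrix.star_eq_conjTranspose]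
  exact Matrix.mem_unitaryGroup_iff'.mp hX.eigenvectorUnitary.2

lemma cdiag_eq_self : cdiag (specU hX) hX.eigenvalues = X := by
  exact (hX.spectral_theorem).symm

lemma matAbs_herm_eq : matAbs X = cdiag (specU hX) (fun i => |hX.eigenvalues i|) := by
  have hpsd : (cdiag (specU hX) (fun i => |hX.eigenvalues i|)).PosSemidef :=
    cdiag_psd _ _ (fun i => abs_nonneg _)
  have hsq : (cdiag (specU hX) (fun i => |hX.eigenvalues i|)) ^ 2 = Xᴴ * X := by
    rw [pow_two, cdiag_mul _ (specU_mul' hX)]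
    have habs : (fun i => |hX.eigenvalues i| * |hX.eigenvalues i|) =
        (fun i => hX.eigenvalues i * hX.eigenvalues i) := by
      funext i; rw [abs_mul_abs_self]
    rw [habs, ← cdiag_mul _ (specU_mul' hX), cdiag_eq_self, hX.eq]
  exact (hpsd.eq_sqrt_of_sq_eq (posSemidef_conjTranspose_mul_self X) hsq).symm

include hX in
lemma pn_decomp : ∃ P N : Matrix n n ℂ, P.PosSemidef ∧ N.PosSemidef ∧ X = P - N ∧
    matAbs X = P + N := by
  refine ⟨cdiag (specU hX) (fun i => max (hX.eigenvalues i) 0),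
    cdiag (specU hX) (fun i => max (-hX.eigenvalues i) 0),
    cdiag_psd _ _ (fun i => le_max_right _ _), cdiag_psd _ _ (fun i => le_max_right _ _), ?_, ?_⟩
  · rw [cdiag_sub]
    have hfun : (fun i => max (hX.eigenvalues i) 0 - max (-hX.eigenvalues i) 0) =
        hX.eigenvalues := by
      funext i
      rcases le_total (hX.eigenvalues i) 0 with h | h
      · rw [max_eq_right h, max_eq_left (neg_nonneg.mpr h)]; ring
      · rw [max_eq_left h, max_eq_right (neg_nonpos.mpr h)]; ring
    rw [hfun, cdiag_eq_self]
  · rw [cdiag_add, matAbs_herm_eq hX]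
    have hfun : (fun i => max (hX.eigenvalues i) 0 + max (-hX.eigenvalues i) 0) =
        (fun i => |hX.eigenvalues i|) := by
      funext i
      rcases le_total (hX.eigenvalues i) 0 with h | h
      · rw [abs_of_nonpos h, max_eq_right h, max_eq_left (neg_nonneg.mpr h)]; ring
      · rw [abs_of_nonneg h, max_eq_left h, max_eq_right (neg_nonpos.mpr h)]; ring
    rw [hfun]

include hX in
lemma sign_exists : ∃ W : Matrix n n ℂ,
    ((1 : Matrix n n ℂ) - W).PosSemidef ∧ ((1 : Matrix n n ℂ) + W).PosSemidef ∧
    W * X = matAbs X ∧ X * W = matAbs X := by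
  refine ⟨cdiag (specU hX) (fun i => Real.sign (hX.eigenvalues i)), ?_, ?_, ?_, ?_⟩
  · rw [show (1 : Matrix n n ℂ) = cdiag (specU hX) (fun _ => 1) by
      rw [cdiag_const _ (specU_mul hX)]; simp]
    rw [cdiag_sub]
    refine cdiag_psd _ _ (fun i => ?_)
    rcases Real.sign_apply_eq (hX.eigenvalues i) with h | h | h <;> rw [h] <;> norm_num
  · rw [show (1 : Matrix n n ℂ) = cdiag (specU hX) (fun _ => 1) by
      rw [cdiag_const _ (specU_mul hX)]; simp]
    rw [cdiag_add]
    refine cdiag_psd _ _ (fun i => ?_)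
    rcases Real.sign_apply_eq (hX.eigenvalues i) with h | h | h <;> rw [h] <;> norm_num
  · have hfun : (fun i => Real.sign (hX.eigenvalues i) * hX.eigenvalues i) =
        (fun i => |hX.eigenvalues i|) := by
      funext i
      rcases lt_trichotomy (hX.eigenvalues i) 0 with h | h | h
      · rw [Real.sign_of_neg h, abs_of_neg h]; ring
      · rw [h]; simp
      · rw [Real.sign_of_pos h, abs_of_pos h]; ring
    have h1 : cdiag (specU hX) (fun i => Real.sign (hX.eigenvalues i)) *
        cdiag (specU hX) hX.eigenvalues = matAbs X := by
      rw [cdiag_mul _ (specU_mul' hX), matAbs_herm_eq hX, hfun]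
    rw [← h1, cdiag_eq_self]
  · have hfun : (fun i => hX.eigenvalues i * Real.sign (hX.eigenvalues i)) =
        (fun i => |hX.eigenvalues i|) := by
      funext i
      rcases lt_trichotomy (hX.eigenvalues i) 0 with h | h | h
      · rw [Real.sign_of_neg h, abs_of_neg h]; ring
      · rw [h]; simp
      · rw [Real.sign_of_pos h, abs_of_pos h]; ring
    have h1 : cdiag (specU hX) hX.eigenvalues *
        cdiag (specU hX) (fun i => Real.sign (hX.eigenvalues i)) = matAbs X := by
      rw [cdiag_mul _ (specU_mul' hX), matAbs_herm_eq hX, hfun]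
    rw [← h1, cdiag_eq_self]

lemma herm_trace_eq : X.trace = ∑ i, (hX.eigenvalues i : ℂ) := by
  conv_lhs => rw [← cdiag_eq_self hX]
  rw [cdiag_trace _ (specU_mul' hX)]

end herm

end StmtAux

namespace StmtAux
set_option linter.unusedSectionVars false

variable {n : Type*} [Fintype n] [DecidableEq n]

lemma matAbs_psd (A : Matrix n n ℂ) : (matAbs A).PosSemidef :=
  (Matrix.posSemidef_conjTranspose_mul_self A).posSemidef_sqrt

lemma matAbs_sq (A : Matrix n n ℂ) : matAbs A * matAbs A = Aᴴ * A :=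
  (Matrix.posSemidef_conjTranspose_mul_self A).sqrt_mul_self

lemma matAbs_of_psd {P : Matrix n n ℂ} (hP : P.PosSemidef) : matAbs P = P := by
  have h2 : P ^ 2 = Pᴴ * P := by rw [pow_two, hP.1.eq]
  exact (hP.eq_sqrt_of_sq_eq (posSemidef_conjTranspose_mul_self P) h2).symm

lemma psd_one : (1 : Matrix n n ℂ).PosSemidef := by
  refine posSemidef_iff_dotProduct_mulVec.mpr ⟨isHermitian_one, fun x => ?_⟩
  rw [one_mulVec]
  exact Finset.sum_nonneg fun i _ => star_mul_self_nonneg _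

lemma psd_smul {P : Matrix n n ℂ} (hP : P.PosSemidef) {r : ℝ} (hr : 0 ≤ r) :
    ((r : ℂ) • P).PosSemidef := by
  refine posSemidef_iff_dotProduct_mulVec.mpr ⟨?_, fun x => ?_⟩
  · unfold Matrix.IsHermitian
    rw [conjTranspose_smul]
    rw [hP.1.eq]
    congr 1
    simp [Complex.star_def, Complex.conj_ofReal]
  · rw [smul_mulVec, dotProduct_smul, smul_eq_mul]
    have h0 : (0:ℂ) ≤ (r:ℂ) := by exact_mod_cast hr
    exact mul_nonneg h0 ((posSemidef_iff_dotProduct_mulVec.mp hP).2 x)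

lemma psd_diag_nonneg {P : Matrix n n ℂ} (hP : P.PosSemidef) (i : n) : 0 ≤ P i i := by
  have h := (posSemidef_iff_dotProduct_mulVec.mp hP).2 (Pi.single i 1)
  simpa [dotProduct, Pi.single_apply, apply_ite, Finset.sum_ite_eq'] using h

lemma psd_trace_nonneg {P : Matrix n n ℂ} (hP : P.PosSemidef) : 0 ≤ P.trace :=
  Finset.sum_nonneg fun i _ => psd_diag_nonneg hP i

lemma re_nonneg_of_nonneg {z : ℂ} (h : 0 ≤ z) : 0 ≤ z.re := (Complex.le_def.mp h).1

lemma psd_trace_mul_nonneg {E Q : Matrix n n ℂ} (hE : E.PosSemidef) (hQ : Q.PosSemidef) :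
    0 ≤ (E * Q).trace := by
  have hB := hQ.posSemidef_sqrt
  have hBB := hQ.sqrt_mul_self
  have key : (E * Q).trace = (hQ.sqrt * E * hQ.sqrtᴴ).trace := by
    rw [hB.1.eq]
    calc (E * Q).trace = (E * (hQ.sqrt * hQ.sqrt)).trace := by rw [hBB]
      _ = ((E * hQ.sqrt) * hQ.sqrt).trace := by rw [Matrix.mul_assoc]
      _ = (hQ.sqrt * (E * hQ.sqrt)).trace := (trace_mul_comm _ _)
      _ = (hQ.sqrt * E * hQ.sqrt).trace := by rw [Matrix.mul_assoc]
  rw [key]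
  exact psd_trace_nonneg (hE.mul_mul_conjTranspose_same _)

lemma contraction_trace_le {C Q : Matrix n n ℂ} (h1 : ((1 : Matrix n n ℂ) - C).PosSemidef)
    (hQ : Q.PosSemidef) : ((C * Q).trace).re ≤ (Q.trace).re := by
  have h := re_nonneg_of_nonneg (psd_trace_mul_nonneg h1 hQ)
  rw [Matrix.sub_mul, Matrix.one_mul, trace_sub, Complex.sub_re] at h
  linarith

lemma dual_le {X C : Matrix n n ℂ} (hX : X.IsHermitian)
    (h1 : ((1 : Matrix n n ℂ) - C).PosSemidef) (h2 : ((1 : Matrix n n ℂ) + C).PosSemidef) :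
    ((C * X).trace).re ≤ traceNorm X := by
  obtain ⟨P, N, hP, hN, hPN, hAbs⟩ := pn_decomp hX
  have e1 : ((C * P).trace).re ≤ (P.trace).re := contraction_trace_le h1 hP
  have e2 : ((-C * N).trace).re ≤ (N.trace).re := by
    apply contraction_trace_le _ hN
    rw [sub_neg_eq_add]
    exact h2
  have hneg : ((-C * N).trace).re = -(((C * N).trace).re) := by
    rw [Matrix.neg_mul, trace_neg, Complex.neg_re]
  have hsplit : ((C * X).trace).re = ((C * P).trace).re - ((C * N).trace).re := by
    rw [hPN, Matrix.mul_sub, trace_sub, Complex.sub_re]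
  have htn : traceNorm X = (P.trace).re + (N.trace).re := by
    unfold traceNorm
    rw [hAbs, trace_add, Complex.add_re]
  linarith

lemma traceNorm_psd_eq {P : Matrix n n ℂ} (hP : P.PosSemidef) :
    traceNorm P = (P.trace).re := by
  unfold traceNorm
  rw [matAbs_of_psd hP]

lemma traceNorm_nonneg' (A : Matrix n n ℂ) : 0 ≤ traceNorm A :=
  re_nonneg_of_nonneg (psd_trace_nonneg (matAbs_psd A))

lemma traceNorm_sub_psd_le {B C : Matrix n n ℂ} (hB : B.PosSemidef) (hC : C.PosSemidef) :
    traceNorm (B - C) ≤ (B.trace).re + (C.trace).re := by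
  have hX : (B - C).IsHermitian := hB.1.sub hC.1
  obtain ⟨W, hW1, hW2, hWX, _⟩ := sign_exists hX
  have htn : traceNorm (B - C) = ((W * (B - C)).trace).re := by
    unfold traceNorm
    rw [hWX]
  have e1 : ((W * B).trace).re ≤ (B.trace).re := contraction_trace_le hW1 hB
  have e2 : ((-W * C).trace).re ≤ (C.trace).re := by
    apply contraction_trace_le _ hC
    rw [sub_neg_eq_add]
    exact hW2
  have hneg : ((-W * C).trace).re = -(((W * C).trace).re) := by
    rw [Matrix.neg_mul, trace_neg, Complex.neg_re]
  have hsp : ((W * (B - C)).trace).re = ((W * B).trace).re - ((W * C).trace).re := by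
    rw [Matrix.mul_sub, trace_sub, Complex.sub_re]
  linarith

lemma sandwich_le {X A : Matrix n n ℂ} (hX : X.IsHermitian) (hA : A.IsHermitian) :
    traceNorm (A * X * A) ≤ ((A * matAbs X * A).trace).re := by
  obtain ⟨P, N, hP, hN, hPN, hAbs⟩ := pn_decomp hX
  have hsplit : A * X * A = A * P * A - A * N * A := by
    rw [hPN]; noncomm_ring
  have hP' : (A * P * A).PosSemidef := by
    have h := hP.mul_mul_conjTranspose_same A
    rwa [hA.eq] at h
  have hN' : (A * N * A).PosSemidef := by
    have h := hN.mul_mul_conjTranspose_same A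
    rwa [hA.eq] at h
  have h := traceNorm_sub_psd_le hP' hN'
  rw [← hsplit] at h
  refine h.trans (le_of_eq ?_)
  have habs2 : A * matAbs X * A = A * P * A + A * N * A := by
    rw [hAbs]; noncomm_ring
  rw [habs2, trace_add, Complex.add_re]

lemma matAbs_real_smul (A : Matrix n n ℂ) {r : ℝ} (hr : 0 ≤ r) :
    matAbs ((r : ℂ) • A) = (r : ℂ) • matAbs A := by
  have hpsd : ((r:ℂ) • matAbs A).PosSemidef := psd_smul (matAbs_psd A) hr
  have habs : matAbs A ^ 2 = Aᴴ * A := by rw [pow_two, matAbs_sq]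
  have hsq : ((r:ℂ) • matAbs A) ^ 2 = ((r:ℂ) • A)ᴴ * ((r:ℂ) • A) := by
    rw [smul_pow, habs, conjTranspose_smul, Matrix.smul_mul, Matrix.mul_smul, smul_smul]
    congr 1
    simp [Complex.star_def, Complex.conj_ofReal, pow_two]
  exact (hpsd.eq_sqrt_of_sq_eq (posSemidef_conjTranspose_mul_self _) hsq).symm

lemma traceNorm_real_smul (A : Matrix n n ℂ) {r : ℝ} (hr : 0 ≤ r) :
    traceNorm ((r : ℂ) • A) = r * traceNorm A := by
  unfold traceNorm
  rw [matAbs_real_smul A hr, trace_smul, smul_eq_mul]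
  simp

section kron

variable {m' : Type*} [Fintype m'] [DecidableEq m']

lemma kron_conjTranspose (A : Matrix m' m' ℂ) (B : Matrix n n ℂ) :
    (A ⊗ₖ B)ᴴ = Aᴴ ⊗ₖ Bᴴ := by
  ext ⟨i, j⟩ ⟨k, l⟩
  simp [conjTranspose_apply, star_mul']

lemma kron_psd {A : Matrix m' m' ℂ} {B : Matrix n n ℂ}
    (hA : A.PosSemidef) (hB : B.PosSemidef) : (A ⊗ₖ B).PosSemidef := by
  exact hA.kronecker hB

lemma kron_trace_eq (Q : Matrix n n ℂ) (X : Matrix (m' × n) (m' × n) ℂ) :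
    (((1 : Matrix m' m' ℂ) ⊗ₖ Q) * X).trace
      = (Q * (Matrix.of fun k l => ∑ b : m', X (b, k) (b, l))).trace := by
  have lhs : (((1 : Matrix m' m' ℂ) ⊗ₖ Q) * X).trace
      = ∑ b : m', ∑ k : n, ∑ l : n, Q k l * X (b, l) (b, k) := by
    simp only [Matrix.trace, Matrix.diag, Matrix.mul_apply, kroneckerMap_apply,
      Matrix.one_apply, Fintype.sum_prod_type, ite_mul, one_mul, zero_mul]
    apply Finset.sum_congr rfl
    intro b _
    apply Finset.sum_congr rfl
    intro k _
    rw [Finset.sum_comm]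
    apply Finset.sum_congr rfl
    intro l _
    simp [Finset.sum_ite_eq, mul_assoc]
  have rhs : (Q * (Matrix.of fun k l => ∑ b : m', X (b, k) (b, l))).trace
      = ∑ k : n, ∑ l : n, Q k l * (∑ b : m', X (b, l) (b, k)) := by
    simp only [Matrix.trace, Matrix.diag, Matrix.mul_apply, Matrix.of_apply]
  rw [lhs, rhs]
  rw [Finset.sum_comm]
  apply Finset.sum_congr rfl
  intro k _
  rw [Finset.sum_comm]
  apply Finset.sum_congr rfl
  intro l _
  rw [Finset.mul_sum]

lemma trace_vecP (v : n → ℂ) (M : Matrix n n ℂ) :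
    ((Matrix.of fun k l => v k * star (v l)) * M).trace = star v ⬝ᵥ (M *ᵥ v) := by
  simp only [Matrix.trace, Matrix.diag, Matrix.mul_apply, Matrix.of_apply, dotProduct,
    Matrix.mulVec, Pi.star_apply, Finset.mul_sum]
  rw [Finset.sum_comm]
  apply Finset.sum_congr rfl
  intro l _
  apply Finset.sum_congr rfl
  intro k _
  ring

lemma vecP_psd (v : n → ℂ) : (Matrix.of fun k l => v k * star (v l)).PosSemidef := by
  refine posSemidef_iff_dotProduct_mulVec.mpr ⟨?_, fun x => ?_⟩
  · unfold Matrix.IsHermitian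
    ext k l
    simp [conjTranspose_apply, star_mul', mul_comm]
  · have key : star x ⬝ᵥ ((Matrix.of fun k l => v k * star (v l)) *ᵥ x) =
        star (star v ⬝ᵥ x) * (star v ⬝ᵥ x) := by
      simp only [dotProduct, Matrix.mulVec, Matrix.of_apply, Pi.star_apply, star_sum, star_mul',
        star_star, Finset.mul_sum, Finset.sum_mul]
      rw [Finset.sum_comm]
      apply Finset.sum_congr rfl
      intro l _
      apply Finset.sum_congr rfl
      intro k _
      ring
    rw [key]
    exact star_mul_self_nonneg _

end kron

end StmtAux


namespace StmtAux

lemma pick_eps (d T lam : ℝ) (hd : 1 ≤ d) (hT : 0 ≤ T) (hlam : T / d < lam) :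
    ∃ eps : ℝ, 0 < eps ∧ eps * (2 * (1 + d)) ≤ 1 ∧
      eps * (lam * d * (1 + d) + d ^ 2 * T) < lam * d - T ∧ eps < 1 := by
  have hd0 : (0:ℝ) < d := lt_of_lt_of_le one_pos hd
  have hlam0 : 0 ≤ lam := le_trans (div_nonneg hT hd0.le) hlam.le
  have hnum : 0 < lam * d - T := by
    have hTd : T / d * d = T := by field_simp
    nlinarith [mul_lt_mul_of_pos_right hlam hd0]
  have hden : 0 < 2 * (lam * d * (1 + d) + d ^ 2 * T + 1) := by nlinarith
  refine ⟨min (1 / (2 * (1 + d))) ((lam * d - T) / (2 * (lam * d * (1 + d) + d ^ 2 * T + 1))),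
    lt_min (by positivity) (div_pos hnum hden), ?_, ?_, ?_⟩
  · rw [← le_div_iff₀ (by positivity : (0:ℝ) < 2 * (1 + d))]
    exact min_le_left _ _
  · have h := min_le_right (1 / (2 * (1 + d)))
      ((lam * d - T) / (2 * (lam * d * (1 + d) + d ^ 2 * T + 1)))
    have hX0 : 0 ≤ lam * d * (1 + d) + d ^ 2 * T := by nlinarith
    calc min (1 / (2 * (1 + d))) ((lam * d - T) / (2 * (lam * d * (1 + d) + d ^ 2 * T + 1))) *
          (lam * d * (1 + d) + d ^ 2 * T)
        ≤ (lam * d - T) / (2 * (lam * d * (1 + d) + d ^ 2 * T + 1)) *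
          (lam * d * (1 + d) + d ^ 2 * T) := mul_le_mul_of_nonneg_right h hX0
      _ < lam * d - T := by
          rw [div_mul_eq_mul_div, div_lt_iff₀ hden]
          nlinarith
  · have h := min_le_left (1 / (2 * (1 + d)))
      ((lam * d - T) / (2 * (lam * d * (1 + d) + d ^ 2 * T + 1)))
    have : 1 / (2 * (1 + d)) < 1 := by
      rw [div_lt_one (by positivity)]
      linarith
    linarith

set_option maxHeartbeats 1000000 in
lemma numeric (d T lam eps a b c R : ℝ)
    (hd : 1 ≤ d) (hT : 0 ≤ T) (hlam : T / d < lam)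
    (he0 : 0 < eps) (he1 : eps * (2 * (1 + d)) ≤ 1)
    (he2 : eps * (lam * d * (1 + d) + d ^ 2 * T) < lam * d - T)
    (hb2 : b ^ 2 = (1 - eps) / d) (ha2 : a ^ 2 = (1 - eps) / d + eps)
    (hb0 : 0 < b) (ha0 : 0 < a) (hc : c = a - b)
    (hR : -T ≤ R)
    (hle : b ^ 2 * T + 2 * (b * c) * lam + c ^ 2 * R ≤ T / d) : False := by
  have hd0 : (0:ℝ) < d := lt_of_lt_of_le one_pos hd
  have hu : eps * (1 + d) ≤ 1 / 2 := by nlinarith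
  have heps1 : eps ≤ 1 / 2 := by nlinarith
  have hba : b ≤ a := by nlinarith
  have hc0 : 0 ≤ c := by rw [hc]; linarith
  have hcab : c * (a + b) = eps := by
    rw [hc]; linear_combination ha2 - hb2
  have hlam0 : 0 ≤ lam := le_trans (div_nonneg hT hd0.le) hlam.le
  have hb2d : b ^ 2 * d = 1 - eps := by
    rw [hb2]; field_simp
  have ha2d : a ^ 2 * d = 1 - eps + eps * d := by
    rw [ha2]; field_simp
  -- c^2 ≤ eps^2 * d
  have h4 : c ^ 2 * (a + b) ^ 2 = eps ^ 2 := by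
    have := congrArg (· ^ 2) hcab
    simpa [mul_pow] using this
  have h8 : 4 * (b ^ 2 * c ^ 2) ≤ eps ^ 2 := by
    nlinarith [mul_nonneg (sq_nonneg c) (mul_nonneg (sub_nonneg.2 hba)
      (by linarith : (0:ℝ) ≤ a + 3 * b))]
  have h2db : 1 ≤ 2 * d * b ^ 2 := by nlinarith
  have hc2 : c ^ 2 ≤ eps ^ 2 * d := by
    nlinarith [mul_nonneg (sq_nonneg c) (sub_nonneg.2 h2db),
      mul_le_mul_of_nonneg_left h8 (by positivity : (0:ℝ) ≤ d / 2)]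
  -- b ≥ a * (1 - eps * (1 + d))
  have hu0 : (0:ℝ) ≤ 1 - eps * (1 + d) := by linarith
  have hsqd : a ^ 2 * (1 - eps * (1 + d)) ^ 2 * d ≤ b ^ 2 * d := by
    have e1 : a ^ 2 * (1 - eps * (1 + d)) ^ 2 * d = (1 - eps + eps * d) * (1 - eps * (1 + d)) ^ 2 := by
      rw [← ha2d]; ring
    rw [e1, hb2d]
    have step1 : (1 - eps + eps * d) * (1 - eps * (1 + d)) ^ 2
        ≤ (1 - eps + eps * d) * (1 - eps * (1 + d)) := by
      have hpos : (0:ℝ) ≤ 1 - eps + eps * d := by nlinarith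
      nlinarith [mul_nonneg (mul_nonneg hpos hu0) (by positivity : (0:ℝ) ≤ eps * (1 + d))]
    have step2 : (1 - eps + eps * d) * (1 - eps * (1 + d)) ≤ 1 - eps := by
      nlinarith [mul_nonneg he0.le hd0.le, mul_nonneg (mul_nonneg he0.le he0.le) hd0.le]
    linarith
  have hsq : a ^ 2 * (1 - eps * (1 + d)) ^ 2 ≤ b ^ 2 :=
    le_of_mul_le_mul_right hsqd hd0
  have hba2 : a * (1 - eps * (1 + d)) ≤ b := by
    nlinarith [mul_pos ha0 hb0, mul_nonneg ha0.le hu0]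
  -- b * c ≥ eps * (1 - eps * (1 + d)) / 2
  have hbc : eps * (1 - eps * (1 + d)) / 2 ≤ b * c := by
    have h6 : b * c * (a + b) = eps * b := by
      calc b * c * (a + b) = b * (c * (a + b)) := by ring
        _ = eps * b := by rw [hcab]; ring
    have h5 : eps * (a * (1 - eps * (1 + d))) ≤ b * c * (2 * a) := by
      nlinarith [mul_nonneg hb0.le hc0, mul_le_mul_of_nonneg_left hba2 he0.le]
    have h2a0 : (0:ℝ) < 2 * a := by linarith
    apply le_of_mul_le_mul_right _ h2a0
    calc eps * (1 - eps * (1 + d)) / 2 * (2 * a) = eps * (a * (1 - eps * (1 + d))) := by ring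
      _ ≤ b * c * (2 * a) := h5
  -- final contradiction
  have hfin1 : (1 - eps) / d * T + eps * (1 - eps * (1 + d)) * lam - eps ^ 2 * d * T ≤ T / d := by
    have t1 : eps * (1 - eps * (1 + d)) * lam ≤ 2 * (b * c) * lam := by
      nlinarith [mul_le_mul_of_nonneg_right hbc hlam0]
    have t2 : -(eps ^ 2 * d * T) ≤ c ^ 2 * R := by
      have s1 : c ^ 2 * (-T) ≤ c ^ 2 * R := mul_le_mul_of_nonneg_left hR (sq_nonneg c)
      nlinarith [mul_le_mul_of_nonneg_right hc2 hT]
    rw [hb2] at hle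
    linarith
  have hMul : (1 - eps) * T + eps * (1 - eps * (1 + d)) * lam * d - eps ^ 2 * d ^ 2 * T ≤ T := by
    have e2 : (1 - eps) / d * T * d = (1 - eps) * T := by field_simp
    have e3 : T / d * d = T := by field_simp
    have := mul_le_mul_of_nonneg_right hfin1 hd0.le
    nlinarith [this]
  have hbr : 0 < eps * (lam * d - T - eps * (lam * d * (1 + d) + d ^ 2 * T)) :=
    mul_pos he0 (by linarith)
  linarith [hbr, hMul]


end StmtAux

set_option maxHeartbeats 2000000 in
/-- `‖S‖_ME = ‖S‖_⋄` iff the M-operator `M(S)` equals `‖S‖_ME · 1_d`. -/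
theorem stmt1 {d m : ℕ} (hd : 1 ≤ d)
    (S : Matrix (Fin d) (Fin d) ℂ →ₗ[ℂ] Matrix (Fin m) (Fin m) ℂ)
    (hS : (choi S).IsHermitian) :
    MENorm S = diamondNorm S ↔
      Mop S = (MENorm S : ℂ) • (1 : Matrix (Fin d) (Fin d) ℂ) := by
  classical
  set J := choi S with hJdef
  have hJ : J.IsHermitian := hS
  set T : ℝ := traceNorm J with hTdef
  have hTT : traceNorm J = T := rfl
  have hT0 : 0 ≤ T := StmtAux.traceNorm_nonneg' J
  have hdR : (1:ℝ) ≤ (d:ℝ) := by exact_mod_cast hd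
  have hd0 : (0:ℝ) < (d:ℝ) := lt_of_lt_of_le one_pos hdR
  have hME : MENorm S = T / d := rfl
  have habsH : (matAbs J).IsHermitian := (StmtAux.matAbs_psd J).1
  -- Hermiticity of Mop
  have hMherm : (Mop S).IsHermitian := by
    unfold Matrix.IsHermitian
    ext k l
    show star ((Mop S) l k) = (Mop S) k l
    simp only [Mop, of_apply, star_sum]
    apply Finset.sum_congr rfl
    intro b _
    exact habsH.apply (b, k) (b, l)
  -- trace of Mop
  have hMtrace : (Mop S).trace = (matAbs J).trace := by
    simp only [Matrix.trace, Matrix.diag, Mop, of_apply, Fintype.sum_prod_type]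
    exact Finset.sum_comm
  -- partial trace identity
  have hpartial : ∀ Q : Matrix (Fin d) (Fin d) ℂ,
      (((1 : Matrix (Fin m) (Fin m) ℂ) ⊗ₖ Q) * matAbs J).trace = (Q * Mop S).trace := by
    intro Q
    exact StmtAux.kron_trace_eq Q (matAbs J)
  -- Mop is PSD
  have hMpsd : (Mop S).PosSemidef := by
    refine posSemidef_iff_dotProduct_mulVec.mpr ⟨hMherm, fun x => ?_⟩
    have h1 : star x ⬝ᵥ (Mop S *ᵥ x) = ((Matrix.of fun k l => x k * star (x l)) * Mop S).trace :=
      (StmtAux.trace_vecP x (Mop S)).symm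
    rw [h1, ← hpartial (Matrix.of fun k l => x k * star (x l))]
    exact StmtAux.psd_trace_mul_nonneg
      (StmtAux.kron_psd StmtAux.psd_one (StmtAux.vecP_psd x)) (StmtAux.matAbs_psd J)
  -- the sup function
  set F : {σ : Matrix (Fin d) (Fin d) ℂ // IsDensity σ} → ℝ :=
    fun σ => traceNorm (((1 : Matrix (Fin m) (Fin m) ℂ) ⊗ₖ matSqrt σ.1) * J *
      ((1 : Matrix (Fin m) (Fin m) ℂ) ⊗ₖ matSqrt σ.1)) with hFdef
  have hdia : diamondNorm S = ⨆ σ, F σ := rfl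
  -- the maximally mixed state
  set r0 : ℝ := (d:ℝ)⁻¹ with hr0
  have hr00 : 0 ≤ r0 := by positivity
  set σ0 : Matrix (Fin d) (Fin d) ℂ := ((r0 : ℝ) : ℂ) • 1 with hσ0
  have hσ0psd : σ0.PosSemidef := StmtAux.psd_smul StmtAux.psd_one hr00
  have hσ0tr : σ0.trace = 1 := by
    rw [hσ0, trace_smul, trace_one, smul_eq_mul, Fintype.card_fin]
    rw [hr0]
    push_cast
    rw [inv_mul_cancel₀]
    exact_mod_cast hd0.ne'
  have hσ0dens : IsDensity σ0 := ⟨hσ0psd, hσ0tr⟩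
  have hs0 : matSqrt σ0 = ((Real.sqrt r0 : ℝ) : ℂ) • 1 := by
    have hpsd : (((Real.sqrt r0 : ℝ) : ℂ) • (1 : Matrix (Fin d) (Fin d) ℂ)).PosSemidef :=
      StmtAux.psd_smul StmtAux.psd_one (Real.sqrt_nonneg _)
    have hsq : (((Real.sqrt r0 : ℝ) : ℂ) • (1 : Matrix (Fin d) (Fin d) ℂ)) ^ 2 = σ0 := by
      rw [smul_pow, one_pow, hσ0]
      congr 1
      rw [← Complex.ofReal_pow, Real.sq_sqrt hr00]
    unfold matSqrt
    rw [dif_pos hσ0psd]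
    exact (hpsd.eq_sqrt_of_sq_eq hσ0psd hsq).symm
  have hF0 : F ⟨σ0, hσ0dens⟩ = T / d := by
    have hkron : (1 : Matrix (Fin m) (Fin m) ℂ) ⊗ₖ matSqrt σ0 =
        ((Real.sqrt r0 : ℝ) : ℂ) • (1 : Matrix (Fin m × Fin d) (Fin m × Fin d) ℂ) := by
      rw [hs0, Matrix.kronecker_smul, Matrix.one_kronecker_one]
    have hprod : ((1 : Matrix (Fin m) (Fin m) ℂ) ⊗ₖ matSqrt σ0) * J *
        ((1 : Matrix (Fin m) (Fin m) ℂ) ⊗ₖ matSqrt σ0) = ((r0 : ℝ) : ℂ) • J := by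
      rw [hkron, Matrix.smul_mul, Matrix.mul_smul, Matrix.smul_mul, Matrix.one_mul,
        Matrix.mul_one, smul_smul]
      congr 1
      rw [← Complex.ofReal_mul, Real.mul_self_sqrt hr00]
    show traceNorm _ = T / d
    rw [hprod, StmtAux.traceNorm_real_smul J hr00, hTT, hr0]
    rw [inv_mul_eq_div]
  -- upper bound by Tr[σ M]
  have hub : ∀ σ : {σ : Matrix (Fin d) (Fin d) ℂ // IsDensity σ},
      F σ ≤ ((σ.1 * Mop S).trace).re := by
    rintro ⟨σ, hσ⟩
    have hσpsd := hσ.1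
    have hRdef : matSqrt σ = hσpsd.sqrt := by unfold matSqrt; rw [dif_pos hσpsd]
    have hRpsd : (matSqrt σ).PosSemidef := by rw [hRdef]; exact hσpsd.posSemidef_sqrt
    have hRR : matSqrt σ * matSqrt σ = σ := by rw [hRdef]; exact hσpsd.sqrt_mul_self
    have hAh : ((1 : Matrix (Fin m) (Fin m) ℂ) ⊗ₖ matSqrt σ).IsHermitian := by
      unfold Matrix.IsHermitian
      rw [StmtAux.kron_conjTranspose, conjTranspose_one, hRpsd.1.eq]
    have h1 : F ⟨σ, hσ⟩ ≤ ((((1 : Matrix (Fin m) (Fin m) ℂ) ⊗ₖ matSqrt σ) * matAbs J *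
        ((1 : Matrix (Fin m) (Fin m) ℂ) ⊗ₖ matSqrt σ)).trace).re := StmtAux.sandwich_le hJ hAh
    have h2 : (((1 : Matrix (Fin m) (Fin m) ℂ) ⊗ₖ matSqrt σ) * matAbs J *
        ((1 : Matrix (Fin m) (Fin m) ℂ) ⊗ₖ matSqrt σ)).trace
        = ((((1 : Matrix (Fin m) (Fin m) ℂ) ⊗ₖ matSqrt σ) *
            ((1 : Matrix (Fin m) (Fin m) ℂ) ⊗ₖ matSqrt σ)) * matAbs J).trace := by
      rw [trace_mul_comm, ← Matrix.mul_assoc]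
    have h3 : ((1 : Matrix (Fin m) (Fin m) ℂ) ⊗ₖ matSqrt σ) *
        ((1 : Matrix (Fin m) (Fin m) ℂ) ⊗ₖ matSqrt σ) = (1 : Matrix (Fin m) (Fin m) ℂ) ⊗ₖ σ := by
      rw [← Matrix.mul_kronecker_mul, Matrix.one_mul, hRR]
    rw [h2, h3, hpartial σ] at h1
    exact h1
  -- uniform bound by T
  have hubT : ∀ σ : {σ : Matrix (Fin d) (Fin d) ℂ // IsDensity σ}, F σ ≤ T := by
    intro σ
    refine (hub σ).trans ?_
    have hσh := σ.2.1.1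
    have heig := σ.2.1.eigenvalues_nonneg
    have htr1 : ∑ i, hσh.eigenvalues i = 1 := by
      have h := StmtAux.herm_trace_eq hσh
      rw [σ.2.2] at h
      have h' : ((∑ i, hσh.eigenvalues i : ℝ) : ℂ) = 1 := by push_cast; exact h.symm
      exact_mod_cast h'
    have hle1 : ∀ i, hσh.eigenvalues i ≤ 1 := by
      intro i
      rw [← htr1]
      exact Finset.single_le_sum (fun j _ => heig j) (Finset.mem_univ i)
    have h1sub : ((1 : Matrix (Fin d) (Fin d) ℂ) - σ.1).PosSemidef := by
      have hone : (1 : Matrix (Fin d) (Fin d) ℂ) =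
          StmtAux.cdiag (StmtAux.specU hσh) (fun _ => 1) := by
        rw [StmtAux.cdiag_const _ (StmtAux.specU_mul hσh)]; simp
      have heq : (1 : Matrix (Fin d) (Fin d) ℂ) - σ.1 =
          StmtAux.cdiag (StmtAux.specU hσh) (fun i => 1 - hσh.eigenvalues i) := by
        calc (1 : Matrix (Fin d) (Fin d) ℂ) - σ.1
            = StmtAux.cdiag (StmtAux.specU hσh) (fun _ => 1) -
              StmtAux.cdiag (StmtAux.specU hσh) hσh.eigenvalues := by
              rw [StmtAux.cdiag_eq_self hσh, ← hone]
          _ = StmtAux.cdiag (StmtAux.specU hσh) (fun i => 1 - hσh.eigenvalues i) :=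
              StmtAux.cdiag_sub _ _ _
      rw [heq]
      exact StmtAux.cdiag_psd _ _ (fun i => by linarith [hle1 i])
    have h := StmtAux.contraction_trace_le h1sub hMpsd
    rw [hMtrace] at h
    exact h
  haveI : Nonempty {σ : Matrix (Fin d) (Fin d) ℂ // IsDensity σ} := ⟨⟨σ0, hσ0dens⟩⟩
  have hbdd : BddAbove (Set.range F) := ⟨T, by rintro x ⟨σ, rfl⟩; exact hubT σ⟩
  have hlow : T / d ≤ ⨆ σ, F σ := hF0 ▸ le_ciSup hbdd ⟨σ0, hσ0dens⟩
  constructor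
  · -- hard direction
    intro hEq
    by_contra hne
    -- eigenvalue sum of Mop
    have hμtr : ∑ i, hMherm.eigenvalues i = T := by
      have h := StmtAux.herm_trace_eq hMherm
      have h2 : ((∑ i, hMherm.eigenvalues i : ℝ) : ℂ) = (matAbs J).trace := by
        push_cast
        rw [← h, hMtrace]
      have h3 := congrArg Complex.re h2
      rw [Complex.ofReal_re] at h3
      exact h3
    have hex : ∃ i, T / d < hMherm.eigenvalues i := by
      by_contra hno
      push_neg at hno
      have hall : ∀ i, hMherm.eigenvalues i = T / d := by
        intro i
        by_contra hlt
        have hlt' : hMherm.eigenvalues i < T / d := lt_of_le_of_ne (hno i) hlt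
        have hsum := Finset.sum_lt_sum (fun j (_ : j ∈ Finset.univ) => hno j)
          ⟨i, Finset.mem_univ i, hlt'⟩
        rw [hμtr, Finset.sum_const, Finset.card_univ, Fintype.card_fin, nsmul_eq_mul] at hsum
        have hdd : (d:ℝ) * (T / d) = T := by field_simp
        linarith
      apply hne
      calc Mop S = StmtAux.cdiag (StmtAux.specU hMherm) hMherm.eigenvalues :=
            (StmtAux.cdiag_eq_self hMherm).symm
        _ = StmtAux.cdiag (StmtAux.specU hMherm) (fun _ => T / d) := by
            have hfe : hMherm.eigenvalues = fun _ => T / (d:ℝ) := funext hall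
            rw [hfe]
        _ = ((T / d : ℝ) : ℂ) • 1 := StmtAux.cdiag_const _ (StmtAux.specU_mul hMherm) (T / d)
        _ = (MENorm S : ℂ) • 1 := by rw [hME]
    obtain ⟨i, hi⟩ := hex
    set lam : ℝ := hMherm.eigenvalues i with hlam
    set v : Fin d → ℂ := ⇑(hMherm.eigenvectorBasis i) with hv
    have hv2 : Mop S *ᵥ v = (lam : ℂ) • v := by
      have h := hMherm.mulVec_eigenvectorBasis i
      funext k
      have hk := congrFun h k
      simpa [Complex.real_smul] using hk
    have hnorm : ‖hMherm.eigenvectorBasis i‖ = 1 := hMherm.eigenvectorBasis.orthonormal.1 i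
    have hv1 : star v ⬝ᵥ v = 1 := by
      have h : (inner ℂ (hMherm.eigenvectorBasis i) (hMherm.eigenvectorBasis i) : ℂ) =
          ((‖hMherm.eigenvectorBasis i‖ : ℝ) : ℂ) ^ 2 := inner_self_eq_norm_sq_to_K _
      rw [EuclideanSpace.inner_eq_star_dotProduct, hnorm] at h
      rw [dotProduct_comm]
      simpa using h
    set P : Matrix (Fin d) (Fin d) ℂ := Matrix.of (fun k l => v k * star (v l)) with hP
    have hPpsd : P.PosSemidef := StmtAux.vecP_psd v
    have hPh : P.IsHermitian := hPpsd.1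
    have hdot : ∑ j, star (v j) * v j = 1 := hv1
    have hPP : P * P = P := by
      ext k l
      show ∑ j, (v k * star (v j)) * (v j * star (v l)) = v k * star (v l)
      calc ∑ j, (v k * star (v j)) * (v j * star (v l))
          = (v k * star (v l)) * ∑ j, star (v j) * v j := by
            rw [Finset.mul_sum]; apply Finset.sum_congr rfl; intro j _; ring
        _ = v k * star (v l) := by rw [hdot, mul_one]
    have hPtr : P.trace = 1 := by
      have h1 : P.trace = ∑ k, v k * star (v k) := by
        simp [Matrix.trace, Matrix.diag, hP]
      rw [h1, ← hdot]
      apply Finset.sum_congr rfl; intro k _; ring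
    have hPMtr : (P * Mop S).trace = (lam : ℂ) := by
      rw [hP, StmtAux.trace_vecP v (Mop S), hv2]
      rw [dotProduct_smul, smul_eq_mul, hv1, mul_one]
    -- choose eps
    obtain ⟨eps, he0, he1, he2, heps1⟩ := StmtAux.pick_eps (d:ℝ) T lam hdR hT0 hi
    -- a, b, c
    have hbarg : 0 < (1 - eps) / d := div_pos (by linarith) hd0
    set b : ℝ := Real.sqrt ((1 - eps) / d) with hb
    set aa : ℝ := Real.sqrt ((1 - eps) / d + eps) with haa
    have hb2 : b ^ 2 = (1 - eps) / d := Real.sq_sqrt hbarg.le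
    have ha2 : aa ^ 2 = (1 - eps) / d + eps := Real.sq_sqrt (by linarith)
    have hb0 : 0 < b := Real.sqrt_pos.mpr hbarg
    have ha0 : 0 < aa := Real.sqrt_pos.mpr (by linarith)
    set c : ℝ := aa - b with hcdef
    have hc0 : 0 ≤ c := by
      rw [hcdef]
      have : b ≤ aa := Real.sqrt_le_sqrt (by linarith)
      linarith
    -- the density matrix σe
    set σe : Matrix (Fin d) (Fin d) ℂ := (((1 - eps) / d : ℝ) : ℂ) • 1 + ((eps : ℝ) : ℂ) • P
      with hσe
    have hσepsd : σe.PosSemidef :=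
      (StmtAux.psd_smul StmtAux.psd_one hbarg.le).add (StmtAux.psd_smul hPpsd he0.le)
    have hσetr : σe.trace = 1 := by
      rw [hσe, trace_add, trace_smul, trace_smul, trace_one, hPtr, smul_eq_mul, smul_eq_mul,
        mul_one, Fintype.card_fin]
      have harith : ((1 - eps) / d : ℝ) * d + eps = 1 := by rw [div_mul_cancel₀ _ hd0.ne']; ring
      exact_mod_cast congrArg (fun t : ℝ => (t : ℂ)) harith
    have hσedens : IsDensity σe := ⟨hσepsd, hσetr⟩
    set Rm : Matrix (Fin d) (Fin d) ℂ := ((b : ℝ) : ℂ) • 1 + ((c : ℝ) : ℂ) • P with hRm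
    have hRmpsd : Rm.PosSemidef :=
      (StmtAux.psd_smul StmtAux.psd_one hb0.le).add (StmtAux.psd_smul hPpsd hc0)
    have hbc2 : b ^ 2 + (2 * b * c + c ^ 2) = aa ^ 2 := by rw [hcdef]; ring
    have h2bc : 2 * b * c + c ^ 2 = eps := by
      have := hb2
      have := ha2
      linarith
    have hResq : Rm ^ 2 = σe := by
      have hmul : Rm * Rm = ((b:ℂ) * (b:ℂ)) • (1 : Matrix (Fin d) (Fin d) ℂ) +
          ((b:ℂ) * (c:ℂ) + (c:ℂ) * (b:ℂ) + (c:ℂ) * (c:ℂ)) • P := by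
        rw [hRm]
        simp only [Matrix.add_mul, Matrix.mul_add, Matrix.smul_mul, Matrix.mul_smul,
          Matrix.one_mul, Matrix.mul_one, smul_smul, hPP]
        module
      rw [pow_two, hmul, hσe]
      congr 1
      · congr 1
        have hbb : (b:ℝ) * b = (1 - eps) / d := by nlinarith [hb2]
        exact_mod_cast congrArg (fun t : ℝ => (t : ℂ)) hbb
      · congr 1
        have hcc : (b:ℝ) * c + c * b + c * c = eps := by nlinarith [h2bc]
        exact_mod_cast congrArg (fun t : ℝ => (t : ℂ)) hcc
    have hms : matSqrt σe = Rm := by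
      unfold matSqrt
      rw [dif_pos hσepsd]
      exact (hRmpsd.eq_sqrt_of_sq_eq hσepsd hResq).symm
    -- K and AK
    set K : Matrix (Fin m × Fin d) (Fin m × Fin d) ℂ := (1 : Matrix (Fin m) (Fin m) ℂ) ⊗ₖ P
      with hK
    have hKh : K.IsHermitian := by
      unfold Matrix.IsHermitian
      rw [hK, StmtAux.kron_conjTranspose, conjTranspose_one, hPh.eq]
    have hKK : K * K = K := by rw [hK, ← Matrix.mul_kronecker_mul, Matrix.one_mul, hPP]
    have hKJtr : (K * matAbs J).trace = (lam : ℂ) := by rw [hK, hpartial P, hPMtr]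
    set AK : Matrix (Fin m × Fin d) (Fin m × Fin d) ℂ :=
      ((b : ℝ) : ℂ) • 1 + ((c : ℝ) : ℂ) • K with hAK
    have hAKkron : (1 : Matrix (Fin m) (Fin m) ℂ) ⊗ₖ matSqrt σe = AK := by
      rw [hms, hRm, hAK, hK, Matrix.kronecker_add, Matrix.kronecker_smul, Matrix.kronecker_smul,
        Matrix.one_kronecker_one]
    have hAKh : AK.IsHermitian := by
      unfold Matrix.IsHermitian
      rw [hAK, conjTranspose_add, conjTranspose_smul, conjTranspose_smul, conjTranspose_one,
        hKh.eq]
      congr 1 <;> · congr 1; simp [Complex.star_def, Complex.conj_ofReal]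
    -- sign operator of J
    obtain ⟨W, hW1, hW2, hWJ, hJW⟩ := StmtAux.sign_exists hJ
    have hWJtr : ((W * J).trace).re = T := by rw [hWJ]; rfl
    have hWKJtr : ((W * K * J).trace).re = lam := by
      have e : (W * K * J).trace = (K * matAbs J).trace := by
        calc (W * K * J).trace = (J * (W * K)).trace := trace_mul_comm _ _
          _ = ((J * W) * K).trace := by rw [Matrix.mul_assoc]
          _ = (K * (J * W)).trace := trace_mul_comm _ _
          _ = (K * matAbs J).trace := by rw [hJW]
      rw [e, hKJtr, Complex.ofReal_re]
    have hKWJtr : ((K * W * J).trace).re = lam := by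
      have e : (K * W * J).trace = (K * matAbs J).trace := by rw [Matrix.mul_assoc, hWJ]
      rw [e, hKJtr, Complex.ofReal_re]
    -- contraction bounds for K*W*K
    have h1mK : ((1 : Matrix (Fin m × Fin d) (Fin m × Fin d) ℂ) - K).PosSemidef := by
      have h1P : ((1 : Matrix (Fin d) (Fin d) ℂ) - P).PosSemidef := by
        have hh : ((1 : Matrix (Fin d) (Fin d) ℂ) - P)ᴴ = 1 - P := by
          rw [conjTranspose_sub, conjTranspose_one, hPh.eq]
        have hidem : ((1 : Matrix (Fin d) (Fin d) ℂ) - P) *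
            ((1 : Matrix (Fin d) (Fin d) ℂ) - P)ᴴ = 1 - P := by
          rw [hh]
          have hnr : ((1 : Matrix (Fin d) (Fin d) ℂ) - P) * (1 - P) = 1 - P - P + P * P := by
            noncomm_ring
          rw [hnr, hPP]
          abel
        have h := posSemidef_self_mul_conjTranspose ((1 : Matrix (Fin d) (Fin d) ℂ) - P)
        rwa [hidem] at h
      have e : (1 : Matrix (Fin m × Fin d) (Fin m × Fin d) ℂ) - K =
          (1 : Matrix (Fin m) (Fin m) ℂ) ⊗ₖ ((1 : Matrix (Fin d) (Fin d) ℂ) - P) := by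
        rw [hK]
        ext ⟨x, y⟩ ⟨z, w⟩
        simp only [Matrix.sub_apply, kroneckerMap_apply, Matrix.one_apply, mul_sub, Prod.ext_iff,
          ite_and, mul_ite, mul_one, mul_zero, ite_mul, one_mul, zero_mul]
        by_cases hxz : x = z <;> by_cases hyw : y = w <;> simp [hxz, hyw]
      rw [e]
      exact StmtAux.kron_psd StmtAux.psd_one h1P
    have hC1 : ((1 : Matrix (Fin m × Fin d) (Fin m × Fin d) ℂ) - K * W * K).PosSemidef := by
      have e : (1 : Matrix (Fin m × Fin d) (Fin m × Fin d) ℂ) - K * W * K =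
          ((1 : Matrix (Fin m × Fin d) (Fin m × Fin d) ℂ) - K) +
          K * ((1 : Matrix (Fin m × Fin d) (Fin m × Fin d) ℂ) - W) * K := by
        have h : K * ((1 : Matrix (Fin m × Fin d) (Fin m × Fin d) ℂ) - W) * K
            = K * K - K * W * K := by noncomm_ring
        rw [h, hKK]; abel
      rw [e]
      refine h1mK.add ?_
      have h := hW1.mul_mul_conjTranspose_same K
      rwa [hKh.eq] at h
    have hC2 : ((1 : Matrix (Fin m × Fin d) (Fin m × Fin d) ℂ) + K * W * K).PosSemidef := by
      have e : (1 : Matrix (Fin m × Fin d) (Fin m × Fin d) ℂ) + K * W * K =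
          ((1 : Matrix (Fin m × Fin d) (Fin m × Fin d) ℂ) - K) +
          K * ((1 : Matrix (Fin m × Fin d) (Fin m × Fin d) ℂ) + W) * K := by
        have h : K * ((1 : Matrix (Fin m × Fin d) (Fin m × Fin d) ℂ) + W) * K
            = K * K + K * W * K := by noncomm_ring
        rw [h, hKK]; abel
      rw [e]
      refine h1mK.add ?_
      have h := hW2.mul_mul_conjTranspose_same K
      rwa [hKh.eq] at h
    have hRup : ((K * W * K * J).trace).re ≤ T := by
      have h := StmtAux.dual_le hJ hC1 hC2
      rwa [hTT] at h
    have hRlo : -T ≤ ((K * W * K * J).trace).re := by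
      have h1' : ((1 : Matrix (Fin m × Fin d) (Fin m × Fin d) ℂ) - -(K * W * K)).PosSemidef := by
        rw [sub_neg_eq_add]; exact hC2
      have h2' : ((1 : Matrix (Fin m × Fin d) (Fin m × Fin d) ℂ) + -(K * W * K)).PosSemidef := by
        rw [← sub_eq_add_neg]; exact hC1
      have h := StmtAux.dual_le hJ h1' h2'
      rw [Matrix.neg_mul, trace_neg, Complex.neg_re, hTT] at h
      linarith
    -- lower bound on F at σe
    have hXh : (AK * J * AK).IsHermitian := by
      unfold Matrix.IsHermitian
      rw [conjTranspose_mul, conjTranspose_mul, hAKh.eq, hJ.eq, ← Matrix.mul_assoc]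
    have hdual := StmtAux.dual_le hXh hW1 hW2
    have hcyc : (W * (AK * J * AK)).trace = ((AK * W * AK) * J).trace := by
      calc (W * (AK * J * AK)).trace = ((W * AK * J) * AK).trace := by
            rw [Matrix.mul_assoc, Matrix.mul_assoc, Matrix.mul_assoc]
        _ = (AK * (W * AK * J)).trace := trace_mul_comm _ _
        _ = ((AK * W * AK) * J).trace := by
            rw [Matrix.mul_assoc, Matrix.mul_assoc, Matrix.mul_assoc]
    have hexp : AK * W * AK = ((b:ℂ) * (b:ℂ)) • W + ((b:ℂ) * (c:ℂ)) • (W * K) +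
        ((c:ℂ) * (b:ℂ)) • (K * W) + ((c:ℂ) * (c:ℂ)) • (K * W * K) := by
      rw [hAK]
      simp only [Matrix.add_mul, Matrix.mul_add, Matrix.smul_mul, Matrix.mul_smul,
        Matrix.one_mul, Matrix.mul_one, smul_smul]
      module
    have hre : ∀ (x y : ℝ) (z : ℂ), (((x:ℂ) * (y:ℂ)) * z).re = x * y * z.re := by
      intro x y z
      rw [← Complex.ofReal_mul, Complex.re_ofReal_mul]
    have htrexp : (((AK * W * AK) * J).trace).re =
        b * b * T + b * c * lam + c * b * lam + c * c * (((K * W * K * J).trace).re) := by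
      have ht : ((AK * W * AK) * J).trace = ((b:ℂ) * (b:ℂ)) * (W * J).trace +
          ((b:ℂ) * (c:ℂ)) * ((W * K) * J).trace + ((c:ℂ) * (b:ℂ)) * ((K * W) * J).trace +
          ((c:ℂ) * (c:ℂ)) * ((K * W * K) * J).trace := by
        rw [hexp]
        simp only [Matrix.add_mul, Matrix.smul_mul, trace_add, trace_smul, smul_eq_mul]
      rw [ht]
      simp only [Complex.add_re, hre]
      rw [hWJtr, hWKJtr, hKWJtr]
    have hFle : F ⟨σe, hσedens⟩ ≤ T / d := by
      have h := le_ciSup hbdd (⟨σe, hσedens⟩ : {σ : Matrix (Fin d) (Fin d) ℂ // IsDensity σ})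
      rw [← hdia, ← hEq, hME] at h
      exact h
    have hFe : F ⟨σe, hσedens⟩ = traceNorm (AK * J * AK) := by
      show traceNorm _ = _
      rw [hAKkron]
    have hchain : b * b * T + b * c * lam + c * b * lam +
        c * c * (((K * W * K * J).trace).re) ≤ T / d := by
      rw [← htrexp]
      calc (((AK * W * AK) * J).trace).re = ((W * (AK * J * AK)).trace).re := by rw [hcyc]
        _ ≤ traceNorm (AK * J * AK) := hdual
        _ = F ⟨σe, hσedens⟩ := hFe.symm
        _ ≤ T / d := hFle
    exact StmtAux.numeric (d:ℝ) T lam eps aa b c (((K * W * K * J).trace).re)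
      hdR hT0 hi he0 he1 he2 hb2 ha2 hb0 ha0 hcdef hRlo (by linarith only [hchain])
  · -- easy direction
    intro hM
    have hup : ∀ σ : {σ : Matrix (Fin d) (Fin d) ℂ // IsDensity σ}, F σ ≤ T / d := by
      intro σ
      refine (hub σ).trans ?_
      rw [hM]
      have hsm : σ.1 * ((MENorm S : ℂ) • (1 : Matrix (Fin d) (Fin d) ℂ)) =
          (MENorm S : ℂ) • σ.1 := by
        rw [Matrix.mul_smul, Matrix.mul_one]
      rw [hsm, trace_smul, smul_eq_mul, σ.2.2, mul_one, Complex.ofReal_re, hME]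
    rw [hME, hdia]
    exact le_antisymm hlow (ciSup_le hup)

end
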